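/- Let ε ≥ 0 and ξ = (ξ₁, ξ₂, ξ₃) ∈ ℝ³, and let A(ξ) be the 4×4 complex matrix in block form A(ξ) = [[−|ξ|², iξᵗ],[iξ, −ε|ξ|² I₃]], i.e., A(ξ)₀₀ = −|ξ|², A(ξ)₀ⱼ = iξⱼ and A(ξ)ⱼ₀ = iξⱼ for j = 1,2,3, and A(ξ)ⱼₖ = −ε|ξ|² δⱼₖ for j,k = 1,2,3. Then for every λ ∈ ℂ: det(A(ξ) − λ I₄) = (λ + ε|ξ|²)² (λ² + (ε+1)|ξ|² λ + ε|ξ|⁴ + |ξ|²). -/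

import Mathlib

open Matrix
open scoped ComplexConjugate

noncomputable section
set_option maxHeartbeats 1000000

lemma det_four_aux (a b c d e f g h i j k l m n o p : ℂ) :
    Matrix.det !![a,b,c,d;e,f,g,h;i,j,k,l;m,n,o,p] =
      a*(f*(k*p - l*o) - g*(j*p - l*n) + h*(j*o - k*n))
      - b*(e*(k*p - l*o) - g*(i*p - l*m) + h*(i*o - k*m))
      + c*(e*(j*p - l*n) - f*(i*p - l*m) + h*(i*n - j*m))
      - d*(e*(j*o - k*n) - f*(i*o - k*m) + g*(i*n - j*m)) := by
  simp [Matrix.det_succ_row_zero, Fin.sum_univ_succ, Matrix.det_fin_three,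
    Matrix.submatrix, Matrix.vecHead, Matrix.vecTail, Fin.succAbove, Fin.castSucc, Fin.castAdd, Fin.castLE]
  ring

/-- **Eigenvalue computation for the Fourier symbol (d = 3).**
For `ε ≥ 0` and `ξ = (ξ₁, ξ₂, ξ₃) ∈ ℝ³`, let `A(ξ)` be the 4×4 complex matrix
`[[−|ξ|², iξᵗ], [iξ, −ε|ξ|² I₃]]`.  Then for every `λ ∈ ℂ`,
`det(A(ξ) − λI₄) = (λ + ε|ξ|²)²(λ² + (ε+1)|ξ|²λ + ε|ξ|⁴ + |ξ|²)`. -/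
theorem det_linearized_symbol
    (ε : ℝ) (hε : 0 ≤ ε) (ξ₁ ξ₂ ξ₃ : ℝ)
    (s : ℂ) (hs : s = ((ξ₁ ^ 2 + ξ₂ ^ 2 + ξ₃ ^ 2 : ℝ) : ℂ))
    (A : Matrix (Fin 4) (Fin 4) ℂ)
    (hA : A = !![-s, Complex.I * ξ₁, Complex.I * ξ₂, Complex.I * ξ₃;
                 Complex.I * ξ₁, -(ε : ℂ) * s, 0, 0;
                 Complex.I * ξ₂, 0, -(ε : ℂ) * s, 0;
                 Complex.I * ξ₃, 0, 0, -(ε : ℂ) * s])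
    (lam : ℂ) :
    (A - lam • (1 : Matrix (Fin 4) (Fin 4) ℂ)).det =
      (lam + (ε : ℂ) * s) ^ 2 *
        (lam ^ 2 + ((ε : ℂ) + 1) * s * lam + (ε : ℂ) * s ^ 2 + s) := by
  subst hA
  have hM : (!![-s, Complex.I * ξ₁, Complex.I * ξ₂, Complex.I * ξ₃;
                 Complex.I * ξ₁, -(ε : ℂ) * s, 0, 0;
                 Complex.I * ξ₂, 0, -(ε : ℂ) * s, 0;
                 Complex.I * ξ₃, 0, 0, -(ε : ℂ) * s]
      - lam • (1 : Matrix (Fin 4) (Fin 4) ℂ))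
      = !![-s - lam, Complex.I * ξ₁, Complex.I * ξ₂, Complex.I * ξ₃;
           Complex.I * ξ₁, -(ε : ℂ) * s - lam, 0, 0;
           Complex.I * ξ₂, 0, -(ε : ℂ) * s - lam, 0;
           Complex.I * ξ₃, 0, 0, -(ε : ℂ) * s - lam] := by
    ext i j
    fin_cases i <;> fin_cases j <;>
      simp [Matrix.one_apply, Matrix.vecHead, Matrix.vecTail]
  rw [hM, det_four_aux]
  have hI : (Complex.I : ℂ) ^ 2 = -1 := Complex.I_sq
  have hsum : (Complex.I * ξ₁) ^ 2 + (Complex.I * ξ₂) ^ 2 + (Complex.I * ξ₃) ^ 2 = -s := by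
    rw [hs]; push_cast; ring_nf; rw [hI]; ring
  linear_combination (-((ε:ℂ)*s + lam)^2) * hsum
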